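/- For all t ≥ 0, the maximum number D(t) of distinct longest common subsequences of two sequences of total length t satisfies D(t) ≤ 4^(t/5) < 1.32^t. -/

import Mathlib

/-- `C` is a longest common subsequence of `A` and `B`. -/
def IsLCS {α : Type*} (A B C : List α) : Prop :=
  C.Sublist A ∧ C.Sublist B ∧ ∀ D : List α, D.Sublist A → D.Sublist B → D.length ≤ C.length

section Aux
variable {α : Type*} [DecidableEq α]

/-- The suffix of `A` strictly after the first occurrence of `x`. -/
def sfx (x : α) (A : List α) : List α := (A.dropWhile (fun c => decide (c ≠ x))).tail

lemma sfx_cons_self (x : α) (A : List α) : sfx x (x :: A) = A := by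
  simp [sfx, List.dropWhile_cons]

lemma sfx_cons_ne {a x : α} (h : a ≠ x) (A : List α) : sfx x (a :: A) = sfx x A := by
  simp [sfx, List.dropWhile_cons, h]

lemma sfx_suffix (x : α) (A : List α) : sfx x A <:+ A :=
  (List.tail_suffix _).trans (List.dropWhile_suffix _)

lemma cons_sfx_suffix {x : α} : ∀ {A : List α}, x ∈ A → x :: sfx x A <:+ A := by
  intro A
  induction A with
  | nil => intro h; simp at h
  | cons a A ih =>
    intro h
    by_cases hax : a = x
    · subst hax; rw [sfx_cons_self]
    · rw [sfx_cons_ne hax]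
      have hxA : x ∈ A := by
        rcases List.mem_cons.mp h with h1 | h1
        · exact absurd h1.symm hax
        · exact h1
      exact (ih hxA).trans (List.suffix_cons a A)

lemma sublist_sfx {x : α} : ∀ {A C : List α}, (x :: C).Sublist A → C.Sublist (sfx x A) := by
  intro A
  induction A with
  | nil => intro C h; exact absurd h (by simp)
  | cons a A ih =>
    intro C h
    by_cases hax : a = x
    · subst hax
      rw [sfx_cons_self]
      cases h with
      | cons _ h' => exact (List.sublist_cons_self _ _).trans h'
      | cons_cons _ h' => exact h'
    · rw [sfx_cons_ne hax]
      cases h with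
      | cons _ h' => exact ih h'
      | cons_cons _ h' => exact absurd rfl hax

lemma cons_sublist_of_sfx {x : α} {A C : List α} (hx : x ∈ A) (h : C.Sublist (sfx x A)) :
    (x :: C).Sublist A :=
  (h.cons₂ x).trans (cons_sfx_suffix hx).sublist

lemma sfx_length_lt {x : α} {A : List α} (hx : x ∈ A) : (sfx x A).length < A.length := by
  have := (cons_sfx_suffix hx).sublist.length_le
  simpa using this

lemma suffix_eq_of_length {l₁ l₂ A : List α} (h1 : l₁ <:+ A) (h2 : l₂ <:+ A)
    (h : l₁.length = l₂.length) : l₁ = l₂ :=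
  (List.suffix_of_suffix_length_le h1 h2 h.le).sublist.eq_of_length h

lemma sfx_len_inj {x y : α} {A : List α} (hx : x ∈ A) (hy : y ∈ A)
    (h : (sfx x A).length = (sfx y A).length) : x = y := by
  have e := suffix_eq_of_length (cons_sfx_suffix hx) (cons_sfx_suffix hy) (by simp [h])
  injection e

lemma cons_sfx_suffix_sfx {x y : α} {A : List α} (hx : x ∈ A) (hy : y ∈ A)
    (h : (sfx y A).length < (sfx x A).length) : y :: sfx y A <:+ sfx x A :=
  List.suffix_of_suffix_length_le (cons_sfx_suffix hy) (sfx_suffix x A) (by simpa using h)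

lemma lcs_finite (A B : List α) : {C : List α | IsLCS A B C}.Finite :=
  (A.sublists.finite_toSet).subset (fun C hC => List.mem_sublists.2 hC.1)

lemma isLCS_tail {A B C : List α} {x : α} (h : IsLCS A B (x :: C)) :
    IsLCS (sfx x A) (sfx x B) C := by
  obtain ⟨hA, hB, hmax⟩ := h
  have hxA : x ∈ A := hA.subset List.mem_cons_self
  have hxB : x ∈ B := hB.subset List.mem_cons_self
  refine ⟨sublist_sfx hA, sublist_sfx hB, fun D hDA hDB => ?_⟩
  have := hmax (x :: D) (cons_sublist_of_sfx hxA hDA) (cons_sublist_of_sfx hxB hDB)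
  simpa using this

lemma pow5_le (m : ℕ) : m ^ 5 ≤ 4 ^ (m + 1) := by
  induction m with
  | zero => decide
  | succ n ih =>
    rcases le_or_gt n 3 with hn | hn
    · interval_cases n <;> decide
    · obtain ⟨k, rfl⟩ : ∃ k, n = k + 4 := ⟨n - 4, by omega⟩
      have h1 : (k + 4 + 1) ^ 5 ≤ 4 * (k + 4) ^ 5 := by ring_nf; linarith [Nat.zero_le k, Nat.zero_le (k^2), Nat.zero_le (k^3), Nat.zero_le (k^4), Nat.zero_le (k^5)]
      calc (k + 4 + 1) ^ 5 ≤ 4 * (k + 4) ^ 5 := h1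
        _ ≤ 4 * 4 ^ (k + 4 + 1) := by omega
        _ = 4 ^ (k + 4 + 1 + 1) := by ring

end Aux
lemma main_bound {α : Type*} [DecidableEq α] :
    ∀ (t : ℕ) (A B : List α), A.length + B.length = t →
      (({C : List α | IsLCS A B C}).ncard : ℝ) ≤ (4 : ℝ) ^ ((t : ℝ) / 5) := by
  intro t
  induction t using Nat.strong_induction_on with
  | _ t IH =>
  intro A B ht
  have one_le : (1 : ℝ) ≤ (4 : ℝ) ^ ((t : ℝ) / 5) := by
    have h0 : (4 : ℝ) ^ (0 : ℝ) ≤ (4 : ℝ) ^ ((t : ℝ) / 5) :=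
      Real.rpow_le_rpow_of_exponent_le (by norm_num) (by positivity)
    simpa using h0
  have hfin : {C : List α | IsLCS A B C}.Finite := lcs_finite A B
  by_cases hemp : ∀ C ∈ {C : List α | IsLCS A B C}, C = []
  · have hsub : {C : List α | IsLCS A B C} ⊆ {([] : List α)} := fun C hC => hemp C hC
    have h1 : ({C : List α | IsLCS A B C}).ncard ≤ 1 := by
      simpa using Set.ncard_le_ncard hsub (Set.finite_singleton _)
    calc (({C : List α | IsLCS A B C}).ncard : ℝ) ≤ 1 := by exact_mod_cast h1
      _ ≤ _ := one_le
  · push_neg at hemp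
    obtain ⟨C₀, hC₀S, hC₀ne⟩ := hemp
    rw [Set.mem_setOf_eq] at hC₀S
    have hne : ∀ C, IsLCS A B C → C ≠ [] := by
      intro C hC hnil
      have h0 := hC.2.2 C₀ hC₀S.1 hC₀S.2.1
      rw [hnil] at h0
      simp at h0
      exact hC₀ne h0
    set Sf : Finset (List α) := hfin.toFinset with hSfdef
    have hmemSf : ∀ C : List α, C ∈ Sf ↔ IsLCS A B C := fun C => by
      simp [hSfdef]
    set Xf : Finset (Option α) := Sf.image (fun C => C.head?) with hXfdef
    set m : ℕ := Xf.card with hm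
    have hXspec : ∀ o ∈ Xf, ∃ x : α, o = some x ∧ x ∈ A ∧ x ∈ B := by
      intro o ho
      obtain ⟨C, hC, rfl⟩ := Finset.mem_image.mp ho
      have hCl : IsLCS A B C := (hmemSf C).mp hC
      have hCne : C ≠ [] := hne C hCl
      exact ⟨C.head hCne, (List.head?_eq_head hCne),
        hCl.1.subset (List.head_mem hCne), hCl.2.1.subset (List.head_mem hCne)⟩
    set IA : Option α → ℕ := fun o => o.elim 0 fun x => A.length - (sfx x A).length with hIAdef
    set JB : Option α → ℕ := fun o => o.elim 0 fun x => B.length - (sfx x B).length with hJBdef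
    have hpos : ∀ o ∈ Xf, 1 ≤ IA o ∧ 1 ≤ JB o := by
      intro o ho
      obtain ⟨x, rfl, hxA, hxB⟩ := hXspec o ho
      have h1 := sfx_length_lt hxA
      have h2 := sfx_length_lt hxB
      constructor <;> simp only [hIAdef, hJBdef, Option.elim] <;> omega
    have hIinj : ∀ o₁ ∈ Xf, ∀ o₂ ∈ Xf, IA o₁ = IA o₂ → o₁ = o₂ := by
      intro o₁ h₁ o₂ h₂ he
      obtain ⟨x, rfl, hxA, _⟩ := hXspec o₁ h₁
      obtain ⟨y, rfl, hyA, _⟩ := hXspec o₂ h₂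
      have h1 := sfx_length_lt hxA
      have h2 := sfx_length_lt hyA
      simp only [hIAdef, Option.elim] at he
      have hlen : (sfx x A).length = (sfx y A).length := by omega
      rw [sfx_len_inj hxA hyA hlen]
    have hanti : ∀ o ∈ Xf, ∀ o' ∈ Xf, IA o < IA o' → JB o' ≤ JB o := by
      intro o ho o' ho' hI
      obtain ⟨x, rfl, hxA, hxB⟩ := hXspec o ho
      obtain ⟨y, rfl, hyA, hyB⟩ := hXspec o' ho'
      by_contra hJ
      push_neg at hJ
      have hlxA := sfx_length_lt hxA
      have hlyA := sfx_length_lt hyA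
      have hlxB := sfx_length_lt hxB
      have hlyB := sfx_length_lt hyB
      have hA' : (sfx y A).length < (sfx x A).length := by
        simp only [hIAdef, Option.elim] at hI; omega
      have hB' : (sfx y B).length < (sfx x B).length := by
        simp only [hJBdef, Option.elim] at hJ; omega
      obtain ⟨C, hCmem, hChead⟩ := Finset.mem_image.mp ho'
      have hCl : IsLCS A B C := (hmemSf C).mp hCmem
      have hCcons : C = y :: C.tail := (List.cons_head?_tail hChead).symm
      have hCtailA : C.tail.Sublist (sfx y A) := sublist_sfx (hCcons ▸ hCl.1)
      have hCtailB : C.tail.Sublist (sfx y B) := sublist_sfx (hCcons ▸ hCl.2.1)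
      have hCsfxA : C.Sublist (sfx x A) := by
        rw [hCcons] at *
        exact (hCtailA.cons₂ y).trans (cons_sfx_suffix_sfx hxA hyA hA').sublist
      have hCsfxB : C.Sublist (sfx x B) := by
        rw [hCcons] at *
        exact (hCtailB.cons₂ y).trans (cons_sfx_suffix_sfx hxB hyB hB').sublist
      have hbig := hCl.2.2 (x :: C) (cons_sublist_of_sfx hxA hCsfxA)
        (cons_sublist_of_sfx hxB hCsfxB)
      simp at hbig
    have hJinj : ∀ o₁ ∈ Xf, ∀ o₂ ∈ Xf, JB o₁ = JB o₂ → o₁ = o₂ := by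
      intro o₁ h₁ o₂ h₂ he
      obtain ⟨x, rfl, _, hxB⟩ := hXspec o₁ h₁
      obtain ⟨y, rfl, _, hyB⟩ := hXspec o₂ h₂
      have h1 := sfx_length_lt hxB
      have h2 := sfx_length_lt hyB
      simp only [hJBdef, Option.elim] at he
      have hlen : (sfx x B).length = (sfx y B).length := by omega
      rw [sfx_len_inj hxB hyB hlen]
    have hrank : ∀ o ∈ Xf, m + 1 ≤ IA o + JB o := by
      intro o ho
      have h1 : (Xf.filter fun o' => IA o' ≤ IA o).card ≤ IA o := by
        calc (Xf.filter fun o' => IA o' ≤ IA o).card ≤ (Finset.Icc 1 (IA o)).card := by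
              apply Finset.card_le_card_of_injOn IA
              · intro o' ho'
                simp only [Finset.mem_coe, Finset.mem_filter] at ho'
                exact Finset.mem_Icc.mpr ⟨(hpos o' ho'.1).1, ho'.2⟩
              · intro o₁ hh₁ o₂ hh₂ he
                exact hIinj _ (Finset.mem_filter.mp (Finset.mem_coe.mp hh₁)).1 _
                  (Finset.mem_filter.mp (Finset.mem_coe.mp hh₂)).1 he
          _ = IA o := by rw [Nat.card_Icc]; omega
      have h2 : (Xf.filter fun o' => JB o' ≤ JB o).card ≤ JB o := by
        calc (Xf.filter fun o' => JB o' ≤ JB o).card ≤ (Finset.Icc 1 (JB o)).card := by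
              apply Finset.card_le_card_of_injOn JB
              · intro o' ho'
                simp only [Finset.mem_coe, Finset.mem_filter] at ho'
                exact Finset.mem_Icc.mpr ⟨(hpos o' ho'.1).2, ho'.2⟩
              · intro o₁ hh₁ o₂ hh₂ he
                exact hJinj _ (Finset.mem_filter.mp (Finset.mem_coe.mp hh₁)).1 _
                  (Finset.mem_filter.mp (Finset.mem_coe.mp hh₂)).1 he
          _ = JB o := by rw [Nat.card_Icc]; omega
      have h3 : (Xf.filter fun o' => IA o ≤ IA o') ⊆ (Xf.filter fun o' => JB o' ≤ JB o) := by
        intro o' ho'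
        simp only [Finset.mem_filter] at ho' ⊢
        refine ⟨ho'.1, ?_⟩
        rcases eq_or_ne o' o with rfl | hne'
        · exact le_refl _
        · have hIne : IA o ≠ IA o' := fun hee => hne' (hIinj _ ho _ ho'.1 hee).symm
          exact hanti o ho o' ho'.1 (lt_of_le_of_ne ho'.2 hIne)
      have h4 : m + 1 ≤ (Xf.filter fun o' => IA o' ≤ IA o).card
          + (Xf.filter fun o' => IA o ≤ IA o').card := by
        have hunion : Xf = (Xf.filter fun o' => IA o' ≤ IA o)
            ∪ (Xf.filter fun o' => IA o ≤ IA o') := by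
          ext o'
          simp only [Finset.mem_union, Finset.mem_filter]
          constructor
          · intro hh
            rcases Nat.le_or_le (IA o') (IA o) with hc | hc
            · exact Or.inl ⟨hh, hc⟩
            · exact Or.inr ⟨hh, hc⟩
          · rintro (⟨hh, _⟩ | ⟨hh, _⟩) <;> exact hh
        have hinter : 1 ≤ ((Xf.filter fun o' => IA o' ≤ IA o)
            ∩ (Xf.filter fun o' => IA o ≤ IA o')).card := by
          apply Finset.card_pos.mpr
          exact ⟨o, by simp [Finset.mem_inter, Finset.mem_filter, ho]⟩
        have hcui := Finset.card_union_add_card_inter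
          (Xf.filter fun o' => IA o' ≤ IA o) (Xf.filter fun o' => IA o ≤ IA o')
        rw [← hunion] at hcui
        omega
      have h5 : (Xf.filter fun o' => IA o ≤ IA o').card
          ≤ (Xf.filter fun o' => JB o' ≤ JB o).card := Finset.card_le_card h3
      omega
    -- per-fiber bound via the induction hypothesis
    have hfiber : ∀ o ∈ Xf, ((Sf.filter fun C => C.head? = o).card : ℝ)
        ≤ (4 : ℝ) ^ (((t : ℝ) - ((IA o + JB o : ℕ) : ℝ)) / 5) := by
      intro o ho
      obtain ⟨x, rfl, hxA, hxB⟩ := hXspec o ho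
      have hfin' : {C' : List α | IsLCS (sfx x A) (sfx x B) C'}.Finite :=
        lcs_finite (sfx x A) (sfx x B)
      have hcard : (Sf.filter fun C => C.head? = some x).card ≤ hfin'.toFinset.card := by
        apply Finset.card_le_card_of_injOn List.tail
        · intro C hC
          simp only [Finset.mem_coe, Finset.mem_filter] at hC ⊢
          have hCl : IsLCS A B C := (hmemSf C).mp hC.1
          have hCcons : C = x :: C.tail := (List.cons_head?_tail hC.2).symm
          rw [Set.Finite.mem_toFinset]
          exact isLCS_tail (hCcons ▸ hCl)
        · intro C₁ hh₁ C₂ hh₂ he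
          have h₁ := Finset.mem_filter.mp (Finset.mem_coe.mp hh₁)
          have h₂ := Finset.mem_filter.mp (Finset.mem_coe.mp hh₂)
          rw [← List.cons_head?_tail h₁.2, ← List.cons_head?_tail h₂.2, he]
      have hlxA := sfx_length_lt hxA
      have hlxB := sfx_length_lt hxB
      have hlt : (sfx x A).length + (sfx x B).length < t := by omega
      have hIH := IH ((sfx x A).length + (sfx x B).length) hlt (sfx x A) (sfx x B) rfl
      have hncard : ({C' : List α | IsLCS (sfx x A) (sfx x B) C'}).ncard
          = hfin'.toFinset.card := Set.ncard_eq_toFinset_card _ hfin'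
      have hexp : (((sfx x A).length + (sfx x B).length : ℕ) : ℝ)
          = (t : ℝ) - ((IA (some x) + JB (some x) : ℕ) : ℝ) := by
        have hIJ : ((sfx x A).length + (sfx x B).length) + (IA (some x) + JB (some x)) = t := by
          simp only [hIAdef, hJBdef, Option.elim]
          omega
        have := congrArg (fun n : ℕ => (n : ℝ)) hIJ
        push_cast at this
        push_cast
        linarith
      calc ((Sf.filter fun C => C.head? = some x).card : ℝ)
          ≤ (hfin'.toFinset.card : ℝ) := by exact_mod_cast hcard
        _ = (({C' : List α | IsLCS (sfx x A) (sfx x B) C'}).ncard : ℝ) := by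
            rw [hncard]
        _ ≤ (4 : ℝ) ^ ((((sfx x A).length + (sfx x B).length : ℕ) : ℝ) / 5) := hIH
        _ = (4 : ℝ) ^ (((t : ℝ) - ((IA (some x) + JB (some x) : ℕ) : ℝ)) / 5) := by
            rw [hexp]
    -- numeric assembly
    have hm5 : (m : ℝ) ≤ (4 : ℝ) ^ (((m : ℝ) + 1) / 5) := by
      have h5 : ((m : ℝ)) ^ (5 : ℕ) ≤ (4 : ℝ) ^ (m + 1 : ℕ) := by exact_mod_cast pow5_le m
      have hmre : (m : ℝ) = (((m : ℝ) ^ (5 : ℕ)) : ℝ) ^ ((1 : ℝ) / 5) := by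
        rw [← Real.rpow_natCast (m : ℝ) 5, ← Real.rpow_mul (by positivity)]
        norm_num
      have h4re : (4 : ℝ) ^ (((m : ℝ) + 1) / 5) = ((4 : ℝ) ^ (m + 1 : ℕ)) ^ ((1 : ℝ) / 5) := by
        rw [← Real.rpow_natCast (4 : ℝ) (m + 1), ← Real.rpow_mul (by norm_num)]
        push_cast
        ring_nf
      calc (m : ℝ) = (((m : ℝ) ^ (5 : ℕ)) : ℝ) ^ ((1 : ℝ) / 5) := hmre
        _ ≤ ((4 : ℝ) ^ (m + 1 : ℕ)) ^ ((1 : ℝ) / 5) :=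
            Real.rpow_le_rpow (pow_nonneg (Nat.cast_nonneg m) 5) h5 (by norm_num)
        _ = (4 : ℝ) ^ (((m : ℝ) + 1) / 5) := h4re.symm
    have hsum : ((Sf.card : ℕ) : ℝ) = ∑ o ∈ Xf, ((Sf.filter fun C => C.head? = o).card : ℝ) := by
      rw [Finset.card_eq_sum_card_image (fun C => C.head?) Sf]
      push_cast
      rfl
    have hmonot : ∀ o ∈ Xf, (4 : ℝ) ^ (((t : ℝ) - ((IA o + JB o : ℕ) : ℝ)) / 5)
        ≤ (4 : ℝ) ^ (((t : ℝ) - ((m : ℝ) + 1)) / 5) := by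
      intro o ho
      apply Real.rpow_le_rpow_of_exponent_le (by norm_num)
      have hr := hrank o ho
      have hrr : ((m : ℝ) + 1) ≤ ((IA o + JB o : ℕ) : ℝ) := by exact_mod_cast hr
      linarith
    have hSfn : (({C : List α | IsLCS A B C}).ncard : ℝ) = ((Sf.card : ℕ) : ℝ) := by
      rw [Set.ncard_eq_toFinset_card _ hfin]
    calc (({C : List α | IsLCS A B C}).ncard : ℝ)
        = ∑ o ∈ Xf, ((Sf.filter fun C => C.head? = o).card : ℝ) := by rw [hSfn, hsum]
      _ ≤ ∑ o ∈ Xf, (4 : ℝ) ^ (((t : ℝ) - ((IA o + JB o : ℕ) : ℝ)) / 5) :=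
          Finset.sum_le_sum hfiber
      _ ≤ ∑ _o ∈ Xf, (4 : ℝ) ^ (((t : ℝ) - ((m : ℝ) + 1)) / 5) :=
          Finset.sum_le_sum hmonot
      _ = (m : ℝ) * (4 : ℝ) ^ (((t : ℝ) - ((m : ℝ) + 1)) / 5) := by
          rw [Finset.sum_const, ← hm, nsmul_eq_mul]
      _ ≤ (4 : ℝ) ^ (((m : ℝ) + 1) / 5) * (4 : ℝ) ^ (((t : ℝ) - ((m : ℝ) + 1)) / 5) :=
          mul_le_mul_of_nonneg_right hm5 (Real.rpow_nonneg (by norm_num) _)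
      _ = (4 : ℝ) ^ ((t : ℝ) / 5) := by
          rw [← Real.rpow_add (by norm_num)]
          congr 1
          ring

theorem stmt3 {α : Type*} (t : ℕ) (A B : List α) (h : A.length + B.length = t) :
    ({C : List α | IsLCS A B C}.ncard : ℝ) ≤ (4 : ℝ) ^ ((t : ℝ) / 5) ∧
      (0 < t → (4 : ℝ) ^ ((t : ℝ) / 5) < (1.32 : ℝ) ^ t) := by
  letI := Classical.decEq α
  constructor
  · exact main_bound t A B h
  · intro ht
    have hc : (4 : ℝ) ^ ((1 : ℝ) / 5) < 1.32 := by
      by_contra hcon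
      push_neg at hcon
      have h5 : ((1.32 : ℝ)) ^ (5 : ℕ) ≤ ((4 : ℝ) ^ ((1 : ℝ) / 5)) ^ (5 : ℕ) :=
        pow_le_pow_left₀ (by norm_num) hcon 5
      rw [← Real.rpow_natCast ((4 : ℝ) ^ ((1 : ℝ) / 5)) 5,
        ← Real.rpow_mul (by norm_num)] at h5
      norm_num at h5
    have heq : (4 : ℝ) ^ ((t : ℝ) / 5) = ((4 : ℝ) ^ ((1 : ℝ) / 5)) ^ t := by
      rw [← Real.rpow_natCast ((4 : ℝ) ^ ((1 : ℝ) / 5)) t, ← Real.rpow_mul (by norm_num)]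
      congr 1
      ring
    rw [heq]
    exact pow_lt_pow_left₀ hc (by positivity) ht.ne'
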